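/- Let F : F_{2^n} → F_{2^n} and suppose no permutation of the form L1(F(x)) + L2(x) exists with both L1, L2 non-zero F_2-linear maps. Then every function CCZ-equivalent to F is EA-equivalent to F or (if F is bijective) to F^{-1}. -/

import Mathlib

noncomputable section

abbrev K (n : ℕ) := GaloisField 2 n

noncomputable instance (n : ℕ) : Fintype (K n) := Fintype.ofFinite _

/-- The absolute trace of `F_{2^n}` to `F_2`. -/
def tr (n : ℕ) : K n →ₗ[ZMod 2] ZMod 2 := Algebra.trace (ZMod 2) (K n)

/-- The additive character `x ↦ (-1)^{Tr(x)}`. -/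
def chi (n : ℕ) (x : K n) : ℤ := (-1) ^ (tr n x).val

/-- The Kloosterman sum. -/
def Kl (n : ℕ) (a : K n) : ℤ := ∑ x : K n, chi n (x⁻¹ + a * x)

/-- The Walsh transform of `F`. -/
def W (n : ℕ) (F : K n → K n) (a b : K n) : ℤ := ∑ x : K n, chi n (a * F x + b * x)

/-- The quadratic form `Q(x) = ∑_{0 ≤ i < j < n} x^{2^i + 2^j}`. -/
def Qf (n : ℕ) (x : K n) : K n := ∑ i ∈ Finset.range n, ∑ j ∈ Finset.Ioo i n, x ^ (2^i + 2^j)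

/-- `A` is an affine map, i.e. a linear map plus a constant. -/
def IsAffineMap {n : ℕ} (A : K n → K n) : Prop :=
  ∃ (L : K n →ₗ[ZMod 2] K n) (c : K n), ∀ x, A x = L x + c

/-- `F` and `G` are EA-equivalent: `A1(F(A2 x)) + A3 x = G x` with `A1, A2` affine
permutations and `A3` affine. -/
def EAEquiv {n : ℕ} (F G : K n → K n) : Prop :=
  ∃ A1 A2 A3 : K n → K n,
    IsAffineMap A1 ∧ IsAffineMap A2 ∧ IsAffineMap A3 ∧
    Function.Bijective A1 ∧ Function.Bijective A2 ∧
    ∀ x, A1 (F (A2 x)) + A3 x = G x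

/-- `F` and `G` are affine equivalent: the case `A3 = 0` of EA-equivalence. -/
def AffEquiv {n : ℕ} (F G : K n → K n) : Prop :=
  ∃ A1 A2 : K n → K n,
    IsAffineMap A1 ∧ IsAffineMap A2 ∧
    Function.Bijective A1 ∧ Function.Bijective A2 ∧
    ∀ x, A1 (F (A2 x)) = G x

/-- CCZ-equivalence: a linear bijection of the plane maps the graph of `F` onto a
translate of the graph of `G`. -/
def CCZEquiv {n : ℕ} (F G : K n → K n) : Prop :=
  ∃ (α β γ δ : K n →ₗ[ZMod 2] K n) (a b : K n),
    Function.Bijective (fun p : K n × K n => (α p.1 + β p.2, γ p.1 + δ p.2)) ∧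
    (fun p : K n × K n => (α p.1 + β p.2 + a, γ p.1 + δ p.2 + b)) ''
      {p : K n × K n | p.2 = F p.1} = {p : K n × K n | p.2 = G p.1}

theorem stmt1 {n : ℕ} (F : K n → K n)
    (hF : ∀ L1 L2 : K n →ₗ[ZMod 2] K n, L1 ≠ 0 → L2 ≠ 0 →
      ¬ Function.Bijective (fun x => L1 (F x) + L2 x)) :
    ∀ G : K n → K n, CCZEquiv F G →
      EAEquiv F G ∨ (Function.Bijective F ∧ EAEquiv (Function.invFun F) G) := by
  intro G hCCZ
  obtain ⟨α, β, γ, δ, a, b, hL, hset⟩ := hCCZ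
  set φ : K n → K n := fun x => α x + β (F x) + a with hφ
  have hG : ∀ x, G (φ x) = γ x + δ (F x) + b := by
    intro x
    have hx : ((x, F x) : K n × K n) ∈ {p : K n × K n | p.2 = F p.1} := rfl
    have hmem := Set.mem_image_of_mem
      (fun p : K n × K n => (α p.1 + β p.2 + a, γ p.1 + δ p.2 + b)) hx
    rw [hset] at hmem
    exact hmem.symm
  have hφsurj : Function.Surjective φ := by
    intro y
    have hy : ((y, G y) : K n × K n) ∈ {p : K n × K n | p.2 = G p.1} := rfl
    rw [← hset] at hy
    obtain ⟨p, hp, heq⟩ := hy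
    refine ⟨p.1, ?_⟩
    have h1 := congrArg Prod.fst heq
    simp only at h1
    rw [hφ]
    simp only
    rw [← hp]
    exact h1
  have hφinj : Function.Injective φ := by
    intro x x' h
    have h1 : α x + β (F x) = α x' + β (F x') := by
      have := h
      rw [hφ] at this
      exact add_right_cancel this
    have h2 : γ x + δ (F x) = γ x' + δ (F x') := by
      have := congrArg G h
      rw [hG x, hG x'] at this
      exact add_right_cancel this
    have h3 : (fun p : K n × K n => (α p.1 + β p.2, γ p.1 + δ p.2)) (x, F x)
        = (fun p : K n × K n => (α p.1 + β p.2, γ p.1 + δ p.2)) (x', F x') := by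
      simp only [Prod.mk.injEq]
      exact ⟨h1, h2⟩
    have := hL.injective h3
    exact (Prod.mk.injEq _ _ _ _).mp this |>.1
  have hφbij : Function.Bijective φ := ⟨hφinj, hφsurj⟩
  by_cases hβ : β = 0
  · -- β = 0 : EA-equivalence
    left
    have hαeq : (fun x => (α x : K n)) = (fun t => t - a) ∘ φ := by
      funext x
      simp [hφ, hβ]
    have hαbij : Function.Bijective (fun x => (α x : K n)) := by
      rw [hαeq]
      exact (Equiv.subRight a).bijective.comp hφbij
    have hδbij : Function.Bijective (fun y => (δ y : K n)) := by
      constructor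
      · intro y y' hyy
        have h3 : (fun p : K n × K n => (α p.1 + β p.2, γ p.1 + δ p.2)) (0, y)
            = (fun p : K n × K n => (α p.1 + β p.2, γ p.1 + δ p.2)) (0, y') := by
          simp only [Prod.mk.injEq, map_zero, zero_add, hβ]
          simp [hyy]
        have := hL.injective h3
        exact (Prod.mk.injEq _ _ _ _).mp this |>.2
      · intro z
        obtain ⟨p, hp⟩ := hL.surjective (0, z)
        have h1 := congrArg Prod.fst hp
        have h2 := congrArg Prod.snd hp
        simp only [hβ, LinearMap.zero_apply, add_zero] at h1 h2
        have hp1 : p.1 = 0 := hαbij.injective (by simpa using h1)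
        refine ⟨p.2, ?_⟩
        rw [hp1, map_zero, zero_add] at h2
        exact h2
    let eα := LinearEquiv.ofBijective α hαbij
    refine ⟨fun z => δ z + b, fun x => eα.symm (x - a), fun x => γ (eα.symm (x - a)),
      ⟨δ, b, fun _ => rfl⟩, ?_, ?_, ?_, ?_, ?_⟩
    · exact ⟨eα.symm.toLinearMap, -(eα.symm a), fun x => by
        simp [sub_eq_add_neg, map_add]⟩
    · exact ⟨γ.comp eα.symm.toLinearMap, γ (-(eα.symm a)), fun x => by
        simp [sub_eq_add_neg, map_add]⟩
    · exact (Equiv.addRight b).bijective.comp hδbij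
    · exact eα.symm.bijective.comp (Equiv.subRight a).bijective
    · intro x
      have hu : φ (eα.symm (x - a)) = x := by
        rw [hφ]
        simp only [hβ, LinearMap.zero_apply, add_zero]
        have : α (eα.symm (x - a)) = x - a := eα.apply_symm_apply (x - a)
        rw [this]
        abel
      have := hG (eα.symm (x - a))
      rw [hu] at this
      rw [this]
      show δ (F (eα.symm (x - a))) + b + γ (eα.symm (x - a)) = γ (eα.symm (x - a)) + δ (F (eα.symm (x - a))) + b
      abel
  · -- β ≠ 0 : then α = 0, F bijective, F⁻¹ EA-equivalent to G
    have hα : α = 0 := by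
      by_contra hα
      refine hF β α hβ hα ?_
      have : (fun x => β (F x) + α x) = (fun t => t - a) ∘ φ := by
        funext x
        simp only [hφ, Function.comp_apply]
        abel
      rw [this]
      exact (Equiv.subRight a).bijective.comp hφbij
    have hβFeq : (fun x => β (F x)) = (fun t => t - a) ∘ φ := by
      funext x
      simp only [hφ, hα, Function.comp_apply, LinearMap.zero_apply, zero_add]
      abel
    have hβFbij : Function.Bijective (fun x => β (F x)) := by
      rw [hβFeq]
      exact (Equiv.subRight a).bijective.comp hφbij
    have hβsurj : Function.Surjective (fun y => (β y : K n)) := by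
      intro z
      obtain ⟨x, hx⟩ := hβFbij.surjective z
      exact ⟨F x, hx⟩
    have hβbij : Function.Bijective (fun y => (β y : K n)) :=
      (Finite.surjective_iff_bijective).mp hβsurj
    let eβ := LinearEquiv.ofBijective β hβbij
    have hFbij : Function.Bijective F := by
      have : F = eβ.symm ∘ (fun x => β (F x)) := by
        funext x
        exact (eβ.symm_apply_apply (F x)).symm
      rw [this]
      exact eβ.symm.bijective.comp hβFbij
    right
    refine ⟨hFbij, ?_⟩
    have hγbij : Function.Bijective (fun x => (γ x : K n)) := by
      constructor
      · intro x x' hxx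
        have h3 : (fun p : K n × K n => (α p.1 + β p.2, γ p.1 + δ p.2)) (x, 0)
            = (fun p : K n × K n => (α p.1 + β p.2, γ p.1 + δ p.2)) (x', 0) := by
          simp only [Prod.mk.injEq, map_zero, add_zero, hα]
          simp [hxx]
        have := hL.injective h3
        exact (Prod.mk.injEq _ _ _ _).mp this |>.1
      · intro z
        obtain ⟨p, hp⟩ := hL.surjective (0, z)
        have h1 := congrArg Prod.fst hp
        have h2 := congrArg Prod.snd hp
        simp only [hα, LinearMap.zero_apply, zero_add] at h1 h2
        have hp2 : p.2 = 0 := hβbij.injective (by simpa using h1)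
        refine ⟨p.1, ?_⟩
        rw [hp2, map_zero, add_zero] at h2
        exact h2
    refine ⟨fun z => γ z, fun y => eβ.symm (y - a), fun y => δ (eβ.symm (y - a)) + b,
      ⟨γ, 0, fun x => by simp⟩, ?_, ?_, hγbij, ?_, ?_⟩
    · exact ⟨eβ.symm.toLinearMap, -(eβ.symm a), fun x => by
        simp [sub_eq_add_neg, map_add]⟩
    · exact ⟨δ.comp eβ.symm.toLinearMap, δ (-(eβ.symm a)) + b, fun x => by
        simp [sub_eq_add_neg, map_add]; abel⟩
    · exact eβ.symm.bijective.comp (Equiv.subRight a).bijective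
    · intro y
      set u : K n := eβ.symm (y - a) with hu
      set x : K n := Function.invFun F u with hx
      have hFx : F x = u := Function.rightInverse_invFun hFbij.surjective u
      have hφx : φ x = y := by
        rw [hφ]
        simp only [hα, LinearMap.zero_apply, zero_add, hFx]
        have : β u = y - a := eβ.apply_symm_apply (y - a)
        rw [this]
        abel
      have := hG x
      rw [hφx, hFx] at this
      rw [this]
      show γ x + (δ (eβ.symm (y - a)) + b) = γ x + δ u + b
      rw [← hu]
      abel
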